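/- Let 𝒳 be a set, let (𝒴, 𝒜) be a measurable space, let W assign to each x ∈ 𝒳 a probability measure W_x on 𝒴, and let V : 𝒴 → {0,1} be measurable. Let n, N ∈ ℕ and λ₁, λ₂ ∈ (0,1). Suppose c_{i,k} ∈ [0,1] (for i ∈ {1,…,N}, k ∈ {1,…,n}) and x_{i,k} ∈ 𝒳 satisfy W_{x_{i,k}}( V^{−1}({1}) ) = c_{i,k} for all i,k. If the codewords c_i = (c_{i,1},…,c_{i,n}) together with sets D_1,…,D_N ⊆ {0,1}^n form an (n,N,λ₁,λ₂) DI code for the Bernoulli channel — i.e. the product Bernoulli measures satisfy ⊗_k Bernoulli(c_{i,k})(D_i) ≥ 1 − λ₁ and ⊗_k Bernoulli(c_{i,k})(D_j) ≤ λ₂ for j ≠ i — then the codewords x_i = (x_{i,1},…,x_{i,n}) together with the decoding sets D̃_i := { y ∈ 𝒴^n : (V(y_1),…,V(y_n)) ∈ D_i } form an (n,N,λ₁,λ₂) DI code for W: ⊗_k W_{x_{i,k}}(D̃_i) ≥ 1 − λ₁ and ⊗_k W_{x_{i,k}}(D̃_j) ≤ λ₂ for all j ≠ i. -/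
import Mathlib


open MeasureTheory

/-- The Bernoulli measure on `Bool` with parameter `x`: mass `x` at `true` and
mass `1 - x` at `false`. -/
noncomputable def bernoulliBool (x : ℝ) : Measure Bool :=
  ENNReal.ofReal x • Measure.dirac true + ENNReal.ofReal (1 - x) • Measure.dirac false


lemma map_eq_bernoulli {Y : Type*} [MeasurableSpace Y]
    (μ : Measure Y) [IsProbabilityMeasure μ] (V : Y → Bool) (hV : Measurable V)
    {r : ℝ} (hr : r ∈ Set.Icc (0:ℝ) 1) (h : μ (V ⁻¹' {true}) = ENNReal.ofReal r) :
    μ.map V = bernoulliBool r := by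
  rw [bernoulliBool]
  have hfalse : V ⁻¹' {false} = (V ⁻¹' {true})ᶜ := by
    ext y; cases hvy : V y <;> simp [hvy]
  have hle : ENNReal.ofReal r ≤ 1 := by
    rw [← ENNReal.ofReal_one]; exact ENNReal.ofReal_le_ofReal hr.2
  ext s hs
  have hmt : MeasurableSet ({true} : Set Bool) := .of_discrete
  have hmf : MeasurableSet ({false} : Set Bool) := .of_discrete
  have hsplit : s = (s ∩ {true}) ∪ (s ∩ {false}) := by
    ext b; cases b <;> simp
  rw [Measure.map_apply hV hs]
  by_cases ht : true ∈ s <;> by_cases hf : false ∈ s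
  · have : s = Set.univ := by ext b; cases b <;> simp [ht, hf]
    subst this
    simp only [Set.preimage_univ, measure_univ]
    simp [Measure.add_apply, Measure.smul_apply, smul_eq_mul,
      ← ENNReal.ofReal_add hr.1 (by linarith [hr.2] : (0:ℝ) ≤ 1 - r)]
  · have : s = {true} := by ext b; cases b <;> simp [ht, hf]
    subst this
    simp [h, Measure.dirac_apply, Measure.add_apply, Measure.smul_apply]
  · have : s = {false} := by ext b; cases b <;> simp [ht, hf]
    subst this
    rw [hfalse, measure_compl (hV hmt) (measure_ne_top _ _), h, measure_univ]
    simp [Measure.dirac_apply, Measure.add_apply, Measure.smul_apply,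
      ENNReal.ofReal_sub 1 hr.1]
  · have : s = ∅ := by ext b; cases b <;> simp [ht, hf]
    subst this
    simp


/-- Code-transfer content of Lemma 1: if a channel `W` with binary post-processing
`V` simulates the Bernoulli parameters `c i k` on the inputs `x i k`, then any
`(n, N, λ₁, λ₂)` DI code for the Bernoulli channel with codewords `c i` transfers to
an `(n, N, λ₁, λ₂)` DI code for `W` with codewords `x i` and decoding sets obtained
by coordinatewise post-processing. -/
theorem bernoulli_code_transfer
    {X Y : Type*} [MeasurableSpace Y]
    (W : X → Measure Y) (hW : ∀ x, IsProbabilityMeasure (W x))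
    (V : Y → Bool) (hV : Measurable V)
    (n N : ℕ) (lam1 lam2 : ℝ)
    (hlam1 : lam1 ∈ Set.Ioo (0:ℝ) 1) (hlam2 : lam2 ∈ Set.Ioo (0:ℝ) 1)
    (c : Fin N → Fin n → ℝ) (hc : ∀ i k, c i k ∈ Set.Icc (0:ℝ) 1)
    (x : Fin N → Fin n → X)
    (hsim : ∀ i k, W (x i k) (V ⁻¹' {true}) = ENNReal.ofReal (c i k))
    (D : Fin N → Set (Fin n → Bool))
    (hD1 : ∀ i, ENNReal.ofReal (1 - lam1)
        ≤ Measure.pi (fun k => bernoulliBool (c i k)) (D i))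
    (hD2 : ∀ i j, i ≠ j →
        Measure.pi (fun k => bernoulliBool (c i k)) (D j) ≤ ENNReal.ofReal lam2) :
    (∀ i, ENNReal.ofReal (1 - lam1)
        ≤ Measure.pi (fun k => W (x i k)) {y : Fin n → Y | (fun k => V (y k)) ∈ D i}) ∧
    (∀ i j, i ≠ j →
        Measure.pi (fun k => W (x i k)) {y : Fin n → Y | (fun k => V (y k)) ∈ D j}
          ≤ ENNReal.ofReal lam2) := by
  have key : ∀ i, (Measure.pi fun k => W (x i k)).map (fun y k => V (y k))
      = Measure.pi fun k => bernoulliBool (c i k) := by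
    intro i
    haveI := hW
    haveI : ∀ k, IsProbabilityMeasure (bernoulliBool (c i k)) := fun k => by
      rw [← map_eq_bernoulli (W (x i k)) V hV (hc i k) (hsim i k)]
      exact Measure.isProbabilityMeasure_map hV.aemeasurable
    exact (measurePreserving_pi _ _ (fun k =>
      ⟨hV, map_eq_bernoulli (W (x i k)) V hV (hc i k) (hsim i k)⟩)).map_eq
  have hmeas : Measurable (fun (y : Fin n → Y) k => V (y k)) :=
    measurable_pi_lambda _ fun k => hV.comp (measurable_pi_apply k)
  have happ : ∀ i j, Measure.pi (fun k => W (x i k))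
      {y : Fin n → Y | (fun k => V (y k)) ∈ D j}
      = Measure.pi (fun k => bernoulliBool (c i k)) (D j) := by
    intro i j
    rw [← key i, Measure.map_apply hmeas .of_discrete]
    rfl
  constructor
  · intro i; rw [happ i i]; exact hD1 i
  · intro i j hij; rw [happ i j]; exact hD2 i j hij
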